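/- arXiv:1911.08256 — 3 statements merged into one kernel-verified Lean document; each statement's English description precedes it below -/
import Mathlib

section
/- Let a > 0, let ξ : [0,a] → ℝ be absolutely continuous with ξ(0) = 0 and such that t ↦ ξ(t)/t is non-decreasing on (0,a], and let ψ : [0,a] → [0,∞) be non-increasing. Then ∫₀ᵃ ξ'(t) ψ(t) dt ≤ (ξ(a)/a) ∫₀ᵃ ψ(t) dt. -/
open MeasureTheory

open Set in
/-- Key lemma: if `f` is integrable on `(0,a]` with all partial integrals nonnegative,
and `ψ` is a nonnegative antitone function, then `∫ f ψ ≥ 0`. -/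
lemma key_nonneg (a : ℝ) (ha : 0 < a) (f ψ : ℝ → ℝ)
    (hf : IntegrableOn f (Set.Ioc 0 a))
    (hF : ∀ b ∈ Set.Icc (0:ℝ) a, 0 ≤ ∫ t in Set.Ioc (0:ℝ) b, f t)
    (hψa : Antitone ψ) (hψpos : ∀ t, 0 ≤ ψ t) :
    0 ≤ ∫ t in Set.Ioc (0:ℝ) a, f t * ψ t := by
  set μ : Measure ℝ := volume.restrict (Set.Ioc 0 a) with hμ
  set ν : Measure ℝ := volume.restrict (Set.Ioi (0:ℝ)) with hν
  have hψm : Measurable ψ := hψa.measurable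
  have hA : MeasurableSet {q : ℝ × ℝ | q.2 < ψ q.1} :=
    measurableSet_lt measurable_snd (hψm.comp measurable_fst)
  set G : ℝ × ℝ → ℝ := fun p => Set.indicator {q : ℝ × ℝ | q.2 < ψ q.1} (fun q => f q.1) p
    with hG
  -- integrability of G on the product
  have hGsm : AEStronglyMeasurable G (μ.prod ν) := by
    exact (hf.aestronglyMeasurable.comp_fst).indicator hA
  have hGint : Integrable G (μ.prod ν) := by
    have hbound : Integrable (fun p : ℝ × ℝ => |f p.1| * Set.indicator (Set.Iio (ψ 0)) 1 p.2)
        (μ.prod ν) := by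
      apply Integrable.mul_prod hf.abs
      rw [hν, ← IntegrableOn, IntegrableOn, integrable_indicator_iff measurableSet_Iio,
        IntegrableOn, Measure.restrict_restrict measurableSet_Iio, Set.Iio_inter_Ioi]
      exact integrableOn_const (by simp [Real.volume_Ioo])
    apply hbound.mono' hGsm
    have hprod : μ.prod ν = (volume.prod volume).restrict ((Set.Ioc 0 a) ×ˢ (Set.Ioi 0)) :=
      Measure.prod_restrict _ _
    rw [hprod]
    filter_upwards [ae_restrict_mem (measurableSet_Ioc.prod measurableSet_Ioi)] with p hp
    rcases hp with ⟨hp1, _⟩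
    by_cases h : p.2 < ψ p.1
    · have h1 : ψ p.1 ≤ ψ 0 := hψa hp1.1.le
      have hip : Set.indicator (Set.Iio (ψ 0)) (1 : ℝ → ℝ) p.2 = 1 :=
        Set.indicator_of_mem (Set.mem_Iio.2 (lt_of_lt_of_le h h1)) _
      have hGp : G p = f p.1 :=
        Set.indicator_of_mem (show p ∈ {q : ℝ × ℝ | q.2 < ψ q.1} from h) _
      rw [hGp, hip, mul_one, Real.norm_eq_abs]
    · have hGp : G p = 0 :=
        Set.indicator_of_notMem (show p ∉ {q : ℝ × ℝ | q.2 < ψ q.1} from h) _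
      rw [hGp, norm_zero]
      exact mul_nonneg (abs_nonneg _)
        (Set.indicator_nonneg (fun _ _ => zero_le_one) _)
  -- Step 1: the integral equals the iterated integral of G
  have hinner : ∀ t : ℝ, ∫ l, G (t, l) ∂ν = f t * ψ t := by
    intro t
    have h1 : (fun l => G (t, l)) = (Set.Iio (ψ t)).indicator (fun _ => f t) := by
      funext l
      by_cases h : l < ψ t
      · simp [hG, Set.indicator_of_mem, h, Set.mem_Iio, Set.mem_setOf_eq]
      · simp [hG, Set.indicator_of_notMem, h, Set.mem_Iio, Set.mem_setOf_eq]
    rw [h1, hν, integral_indicator measurableSet_Iio,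
      Measure.restrict_restrict measurableSet_Iio, Set.Iio_inter_Ioi, setIntegral_const,
      Real.volume_real_Ioo_of_le (hψpos t), smul_eq_mul, mul_comm]
    congr 1
    ring
  have hswap : ∫ t, f t * ψ t ∂μ = ∫ l, ∫ t, G (t, l) ∂μ ∂ν := by
    have h1 : ∫ t, f t * ψ t ∂μ = ∫ t, ∫ l, G (t, l) ∂ν ∂μ := by
      congr 1; funext t; rw [hinner]
    rw [h1]
    exact integral_integral_swap hGint
  -- Step 2: each inner integral (in t) is nonnegative
  have hsec : ∀ l : ℝ, 0 ≤ ∫ t, G (t, l) ∂μ := by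
    intro l
    have hmeas : MeasurableSet {t : ℝ | l < ψ t} := measurableSet_lt measurable_const hψm
    have h1 : (fun t => G (t, l)) = Set.indicator {t : ℝ | l < ψ t} f := by
      funext t
      by_cases h : l < ψ t
      · simp [hG, Set.indicator_of_mem, h, Set.mem_setOf_eq]
      · simp [hG, Set.indicator_of_notMem, h, Set.mem_setOf_eq]
    rw [h1, hμ, integral_indicator hmeas, Measure.restrict_restrict hmeas]
    -- the set {l < ψ} ∩ Ioc 0 a is a.e. an interval Ioc 0 b
    set T : Set ℝ := {t : ℝ | t ∈ Set.Icc (0:ℝ) a ∧ l < ψ t} with hT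
    set b : ℝ := sSup (insert 0 T) with hb
    have hbdd : BddAbove (insert 0 T) := by
      refine ⟨a, ?_⟩
      rintro x (rfl | hx)
      · exact ha.le
      · exact hx.1.2
    have hb0 : 0 ≤ b := le_csSup hbdd (Set.mem_insert _ _)
    have hba : b ≤ a := csSup_le ⟨0, Set.mem_insert _ _⟩ (by
      rintro x (rfl | hx)
      · exact ha.le
      · exact hx.1.2)
    have hsub1 : {t : ℝ | l < ψ t} ∩ Set.Ioc 0 a ⊆ Set.Ioc 0 b := by
      rintro t ⟨ht1, ht2⟩
      exact ⟨ht2.1, le_csSup hbdd (Set.mem_insert_of_mem _ ⟨⟨ht2.1.le, ht2.2⟩, ht1⟩)⟩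
    have hsub2 : Set.Ioo 0 b ⊆ {t : ℝ | l < ψ t} ∩ Set.Ioc 0 a := by
      rintro t ⟨ht1, ht2⟩
      obtain ⟨u, hu, htu⟩ := exists_lt_of_lt_csSup ⟨0, Set.mem_insert _ _⟩ (hb ▸ ht2)
      rcases hu with rfl | hu
      · exact absurd htu (not_lt.2 ht1.le)
      · exact ⟨lt_of_lt_of_le hu.2 (hψa htu.le), ht1, le_trans htu.le hu.1.2⟩
    have haeeq : ({t : ℝ | l < ψ t} ∩ Set.Ioc 0 a : Set ℝ) =ᵐ[volume] (Set.Ioc (0:ℝ) b : Set ℝ) := by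
      have hzero : (volume : Measure ℝ) {b} = 0 := Real.volume_singleton
      rw [Filter.eventuallyEq_set]
      filter_upwards [measure_eq_zero_iff_ae_notMem.1 hzero] with t ht
      constructor
      · intro h; exact hsub1 h
      · intro h
        have : t ∈ Set.Ioo 0 b := ⟨h.1, lt_of_le_of_ne h.2 ht⟩
        exact hsub2 this
    rw [setIntegral_congr_set haeeq]
    exact hF b ⟨hb0, hba⟩
  rw [show (∫ t in Set.Ioc (0:ℝ) a, f t * ψ t) = ∫ t, f t * ψ t ∂μ from rfl, hswap]
  exact integral_nonneg fun l => hsec l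

/-- Let `a > 0`, let `ξ : [0,a] → ℝ` be absolutely continuous (encoded via an
integrable a.e.-derivative `ξ'` satisfying the fundamental theorem of calculus) with `ξ 0 = 0`,
such that `t ↦ ξ t / t` is non-decreasing on `(0, a]`, and let `ψ : [0,a] → [0,∞)` be
non-increasing. Then `∫₀ᵃ ξ'(t) ψ(t) dt ≤ (ξ(a)/a) ∫₀ᵃ ψ(t) dt`. -/
theorem stmt_0 (a : ℝ) (ha : 0 < a) (ξ ξ' ψ : ℝ → ℝ)
    (hξ'int : IntervalIntegrable ξ' volume 0 a)
    (hFTC : ∀ t ∈ Set.Icc (0 : ℝ) a, ξ t = ∫ s in (0 : ℝ)..t, ξ' s)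
    (hξ0 : ξ 0 = 0)
    (hmono : ∀ s t : ℝ, 0 < s → s ≤ t → t ≤ a → ξ s / s ≤ ξ t / t)
    (hψ0 : ∀ t ∈ Set.Icc (0 : ℝ) a, 0 ≤ ψ t)
    (hψanti : ∀ s t : ℝ, 0 ≤ s → s ≤ t → t ≤ a → ψ t ≤ ψ s) :
    (∫ t in (0 : ℝ)..a, ξ' t * ψ t) ≤ ξ a / a * ∫ t in (0 : ℝ)..a, ψ t := by
  set c : ℝ := ξ a / a with hc
  -- clamped version of ψ, antitone on all of ℝ
  set ψ' : ℝ → ℝ := fun t => ψ (max 0 (min t a)) with hψ'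
  have hclamp_mem : ∀ t : ℝ, max 0 (min t a) ∈ Set.Icc (0:ℝ) a := fun t =>
    ⟨le_max_left _ _, max_le (le_of_lt ha) (min_le_right _ _)⟩
  have hψ'anti : Antitone ψ' := by
    intro s t hst
    exact hψanti _ _ (hclamp_mem s).1
      (max_le_max le_rfl (min_le_min_right _ hst)) (hclamp_mem t).2
  have hψ'pos : ∀ t, 0 ≤ ψ' t := fun t => hψ0 _ (hclamp_mem t)
  have hψ'eq : ∀ t ∈ Set.Ioc (0:ℝ) a, ψ' t = ψ t := by
    intro t ht
    simp only [hψ']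
    rw [min_eq_left ht.2, max_eq_right ht.1.le]
  set f : ℝ → ℝ := fun t => c - ξ' t with hf
  have hξ'Ioc : IntegrableOn ξ' (Set.Ioc 0 a) := by
    have := intervalIntegrable_iff.1 hξ'int
    rwa [Set.uIoc_of_le ha.le] at this
  have hfint : IntegrableOn f (Set.Ioc 0 a) :=
    (integrableOn_const (by simp [Real.volume_Ioc])).sub hξ'Ioc
  have hFTC' : ∀ b ∈ Set.Icc (0:ℝ) a, (∫ t in Set.Ioc (0:ℝ) b, f t) = c * b - ξ b := by
    intro b hb
    have hbint : IntervalIntegrable ξ' volume 0 b := by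
      apply hξ'int.mono_set
      rw [Set.uIcc_of_le hb.1, Set.uIcc_of_le (hb.1.trans hb.2)]
      exact Set.Icc_subset_Icc le_rfl hb.2
    rw [← intervalIntegral.integral_of_le hb.1]
    rw [intervalIntegral.integral_sub intervalIntegrable_const hbint,
      intervalIntegral.integral_const, hFTC b hb]
    simp [smul_eq_mul, mul_comm]
  have hF : ∀ b ∈ Set.Icc (0:ℝ) a, 0 ≤ ∫ t in Set.Ioc (0:ℝ) b, f t := by
    intro b hb
    rw [hFTC' b hb]
    rcases eq_or_lt_of_le hb.1 with rfl | hb0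
    · simp [hξ0]
    · have h1 : ξ b / b ≤ c := hmono b a hb0 hb.2 le_rfl
      have := (div_le_iff₀ hb0).1 h1
      linarith
  have hkey := key_nonneg a ha f ψ' hfint hF hψ'anti hψ'pos
  -- unpack
  have hψ'meas : Measurable ψ' := hψ'anti.measurable
  have hψint : IntegrableOn ψ (Set.Ioc 0 a) := by
    have h1 : AntitoneOn ψ (Set.uIcc 0 a) := by
      rw [Set.uIcc_of_le ha.le]
      intro s hs t ht hst
      exact hψanti s t hs.1 hst ht.2
    have h2 : IntervalIntegrable ψ volume 0 a := h1.intervalIntegrable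
    have := intervalIntegrable_iff.1 h2
    rwa [Set.uIoc_of_le ha.le] at this
  have hmulint : IntegrableOn (fun t => ξ' t * ψ' t) (Set.Ioc 0 a) := by
    apply Integrable.mono' (hξ'Ioc.abs.mul_const (ψ 0))
      (hξ'Ioc.aestronglyMeasurable.mul hψ'meas.aestronglyMeasurable)
    filter_upwards [ae_restrict_mem measurableSet_Ioc] with t ht
    show ‖ξ' t * ψ' t‖ ≤ |ξ' t| * ψ 0
    have h1 : ψ' t ≤ ψ 0 := by
      have h2 : ψ' t ≤ ψ' 0 := hψ'anti ht.1.le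
      have h3 : ψ' 0 = ψ 0 := by
        simp only [hψ']
        rw [min_eq_left ha.le, max_self]
      linarith
    rw [norm_mul, Real.norm_eq_abs, Real.norm_eq_abs, abs_of_nonneg (hψ'pos t)]
    exact mul_le_mul_of_nonneg_left h1 (abs_nonneg _)
  have hψ'int : IntegrableOn ψ' (Set.Ioc 0 a) :=
    hψint.congr_fun (fun t ht => (hψ'eq t ht).symm) measurableSet_Ioc
  have heq1 : (∫ t in Set.Ioc (0:ℝ) a, f t * ψ' t)
      = c * (∫ t in Set.Ioc (0:ℝ) a, ψ' t) - ∫ t in Set.Ioc (0:ℝ) a, ξ' t * ψ' t := by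
    have hcψint : IntegrableOn (fun t => c * ψ' t) (Set.Ioc 0 a) := hψ'int.const_mul c
    have : (fun t => f t * ψ' t) = fun t => c * ψ' t - ξ' t * ψ' t := by
      funext t; simp only [hf]; ring
    rw [this, integral_sub hcψint hmulint, integral_const_mul]
  have heq2 : (∫ t in Set.Ioc (0:ℝ) a, ψ' t) = ∫ t in (0:ℝ)..a, ψ t := by
    rw [intervalIntegral.integral_of_le ha.le]
    apply setIntegral_congr_fun measurableSet_Ioc
    intro t ht; exact hψ'eq t ht
  have heq3 : (∫ t in Set.Ioc (0:ℝ) a, ξ' t * ψ' t) = ∫ t in (0:ℝ)..a, ξ' t * ψ t := by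
    rw [intervalIntegral.integral_of_le ha.le]
    apply setIntegral_congr_fun measurableSet_Ioc
    intro t ht
    show ξ' t * ψ' t = ξ' t * ψ t
    rw [hψ'eq t ht]
  rw [heq1, heq2, heq3] at hkey
  linarith
end

section
/- Let Ω ⊂ ℝ^N be an open bounded convex set of class C¹ containing the ball B_R(0), and suppose ⟨x, ν_Ω(x)⟩ = R for every x ∈ ∂Ω. Then Ω = B_R(0). -/
open MeasureTheory
open scoped RealInnerProductSpace

/-- Let `Ω ⊂ ℝ^N` be an open bounded convex set of class `C¹` (encoded by the
existence of a unique outer unit normal at every boundary point), containing the ball `B_R(0)`,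
and suppose `⟪x, ν_Ω(x)⟫ = R` for every `x ∈ ∂Ω`. Then `Ω = B_R(0)`. -/
theorem stmt_2 (N : ℕ) (Ω : Set (EuclideanSpace ℝ (Fin N))) (R : ℝ)
    (hΩopen : IsOpen Ω) (hΩbdd : Bornology.IsBounded Ω) (hΩconv : Convex ℝ Ω)
    (hR : 0 < R) (hball : Metric.ball (0 : EuclideanSpace ℝ (Fin N)) R ⊆ Ω)
    (hC1 : ∀ x ∈ frontier Ω, ∃! ν : EuclideanSpace ℝ (Fin N),
      ‖ν‖ = 1 ∧ ∀ y ∈ Ω, ⟪y - x, ν⟫ ≤ 0)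
    (heq : ∀ x ∈ frontier Ω, ∀ ν : EuclideanSpace ℝ (Fin N),
      (‖ν‖ = 1 ∧ ∀ y ∈ Ω, ⟪y - x, ν⟫ ≤ 0) → ⟪x, ν⟫ = R) :
    Ω = Metric.ball (0 : EuclideanSpace ℝ (Fin N)) R := by
  have h0 : (0 : EuclideanSpace ℝ (Fin N)) ∈ Ω := hball (by simpa using hR)
  have hKc : IsCompact (closure Ω) :=
    Metric.isCompact_of_isClosed_isBounded isClosed_closure hΩbdd.closure
  obtain ⟨x, hxK, hxmax⟩ := hKc.exists_isMaxOn ⟨0, subset_closure h0⟩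
    (continuous_norm.continuousOn)
  set M := ‖x‖ with hM
  have hle : ∀ y ∈ closure Ω, ‖y‖ ≤ M := fun y hy => hxmax hy
  -- M ≤ R
  have hMR : M ≤ R := by
    rcases eq_or_lt_of_le (norm_nonneg x) with h0M | h0M
    · have hM0 : M = 0 := h0M.symm
      linarith
    · -- x ∉ Ω
      have hxnot : x ∉ Ω := by
        intro hxΩ
        obtain ⟨ε, hε, hb⟩ := Metric.isOpen_iff.mp hΩopen x hxΩ
        have hx0 : x ≠ 0 := by
          intro h; rw [h, norm_zero] at h0M; exact lt_irrefl 0 h0M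
        set c : ℝ := 1 + ε / (2 * M) with hc
        have hcpos : 1 < c := by
          have h : 0 < ε / (2 * M) := div_pos hε (by linarith)
          rw [hc]; linarith
        have hmem : c • x ∈ Metric.ball x ε := by
          rw [Metric.mem_ball, dist_eq_norm]
          have : c • x - x = (c - 1) • x := by rw [sub_smul, one_smul]
          rw [this, norm_smul, Real.norm_eq_abs, abs_of_pos (by linarith)]
          have : (c - 1) * ‖x‖ = ε / 2 := by
            rw [hc]; field_simp; rw [← hM, add_sub_cancel_left]; exact div_mul_cancel₀ ε (show M ≠ 0 from h0M.ne')
          rw [this]; linarith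
        have : ‖c • x‖ ≤ M := hle _ (subset_closure (hb hmem))
        rw [norm_smul, Real.norm_eq_abs, abs_of_pos (by linarith)] at this
        nlinarith
      have hxfr : x ∈ frontier Ω := by
        rw [frontier, hΩopen.interior_eq]
        exact ⟨hxK, hxnot⟩
      set ν : EuclideanSpace ℝ (Fin N) := M⁻¹ • x with hν
      have hν1 : ‖ν‖ = 1 := by
        rw [hν, norm_smul, Real.norm_eq_abs, abs_of_pos (by positivity)]
        field_simp
        rw [← hM, div_self (show M ≠ 0 from h0M.ne')]
      have hsupp : ∀ y ∈ Ω, ⟪y - x, ν⟫ ≤ 0 := by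
        intro y hy
        rw [hν, real_inner_smul_right, inner_sub_left, real_inner_self_eq_norm_sq]
        have h1 : ⟪y, x⟫ ≤ ‖y‖ * ‖x‖ := real_inner_le_norm y x
        have h2 : ‖y‖ ≤ M := hle y (subset_closure hy)
        have : ⟪y, x⟫ - ‖x‖ ^ 2 ≤ 0 := by nlinarith [norm_nonneg y]
        have hMi : (0:ℝ) ≤ M⁻¹ := by positivity
        nlinarith
      have := heq x hxfr ν ⟨hν1, hsupp⟩
      rw [hν, real_inner_smul_right, real_inner_self_eq_norm_sq] at this
      have : M⁻¹ * M ^ 2 = R := this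
      have hMe : M = R := by field_simp at this; nlinarith
      linarith
  -- conclude
  apply Set.Subset.antisymm _ hball
  intro z hz
  rw [Metric.mem_ball, dist_zero_right]
  rcases eq_or_ne z 0 with rfl | hz0
  · simpa using hR
  · obtain ⟨ε, hε, hb⟩ := Metric.isOpen_iff.mp hΩopen z hz
    have hznorm : 0 < ‖z‖ := norm_pos_iff.mpr hz0
    set c : ℝ := 1 + ε / (2 * ‖z‖) with hc
    have hcpos : 1 < c := by
      have h : 0 < ε / (2 * ‖z‖) := div_pos hε (by linarith)
      rw [hc]; linarith
    have hmem : c • z ∈ Metric.ball z ε := by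
      rw [Metric.mem_ball, dist_eq_norm]
      have : c • z - z = (c - 1) • z := by rw [sub_smul, one_smul]
      rw [this, norm_smul, Real.norm_eq_abs, abs_of_pos (by linarith)]
      have : (c - 1) * ‖z‖ = ε / 2 := by rw [hc]; field_simp; ring
      rw [this]; linarith
    have : ‖c • z‖ ≤ M := hle _ (subset_closure (hb hmem))
    rw [norm_smul, Real.norm_eq_abs, abs_of_pos (by linarith)] at this
    nlinarith
end

section
/- Let 1 ≤ q < 2 and let Ω ⊂ ℝ^N be an open bounded convex set containing the ball B_{R_Ω}(0), where R_Ω is the inradius. Let f : [0,1] → [0,∞) be C¹, decreasing, with f(1) = 0, and let j_Ω be the Minkowski functional of Ω. Then ∫_Ω f(j_Ω(x))^q dx = N |Ω| ∫₀¹ f(t)^q t^{N-1} dt and ∫_Ω |∇(f ∘ j_Ω)|² dx ≤ (N|Ω|/R_Ω²) ∫₀¹ |f'(t)|² t^{N-1} dt. -/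
open MeasureTheory

/-- The inradius of a set: the radius of the largest open ball contained in it. -/
noncomputable def inradius {N : ℕ} (Ω : Set (EuclideanSpace ℝ (Fin N))) : ℝ :=
  sSup {r : ℝ | ∃ x : EuclideanSpace ℝ (Fin N), Metric.ball x r ⊆ Ω}

open Set Metric Pointwise
open scoped NNReal ENNReal

section Aux


lemma gauge_lt_smul {N : ℕ} {Ω : Set (EuclideanSpace ℝ (Fin N))}
    (hΩopen : IsOpen Ω) (hΩconv : Convex ℝ Ω)
    (h0 : (0 : EuclideanSpace ℝ (Fin N)) ∈ Ω) {r : ℝ} (hr : 0 < r) :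
    {x : EuclideanSpace ℝ (Fin N) | gauge Ω x < r} = r • Ω := by
  have hΩeq := gauge_lt_one_eq_self_of_isOpen hΩconv h0 hΩopen
  ext x
  constructor
  · intro hx
    refine ⟨r⁻¹ • x, ?_, by simp [smul_smul, mul_inv_cancel₀ hr.ne']⟩
    rw [← hΩeq]
    show gauge Ω (r⁻¹ • x) < 1
    rw [gauge_smul_of_nonneg (inv_nonneg.2 hr.le), smul_eq_mul,
      show r⁻¹ * gauge Ω x = gauge Ω x / r by ring]
    exact (div_lt_one hr).2 hx
  · rintro ⟨y, hy, rfl⟩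
    show gauge Ω (r • y) < r
    rw [gauge_smul_of_nonneg hr.le, smul_eq_mul]
    have hy1 : gauge Ω y < 1 := gauge_lt_one_of_mem_of_isOpen hΩopen hy
    nlinarith [gauge_nonneg (s := Ω) y]

lemma volume_gauge_lt {N : ℕ} {Ω : Set (EuclideanSpace ℝ (Fin N))}
    (hΩopen : IsOpen Ω) (hΩconv : Convex ℝ Ω)
    (h0 : (0 : EuclideanSpace ℝ (Fin N)) ∈ Ω) {r : ℝ} (hr : 0 < r) :
    volume {x : EuclideanSpace ℝ (Fin N) | gauge Ω x < r} =
      ENNReal.ofReal (r ^ N) * volume Ω := by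
  rw [gauge_lt_smul hΩopen hΩconv h0 hr, Measure.addHaar_smul, finrank_euclideanSpace_fin,
    abs_of_pos (pow_pos hr N)]

lemma gauge_map_measure {N : ℕ} (hN : 1 ≤ N) {Ω : Set (EuclideanSpace ℝ (Fin N))}
    (hΩopen : IsOpen Ω) (hΩbdd : Bornology.IsBounded Ω) (hΩconv : Convex ℝ Ω)
    (h0 : (0 : EuclideanSpace ℝ (Fin N)) ∈ Ω) :
    (volume.restrict Ω).map (gauge Ω) =
      volume.withDensity (fun t => ((Set.indicator (Set.Ioc (0:ℝ) 1)
        (fun t => Real.toNNReal (N * (volume Ω).toReal * t ^ (N - 1))) t : ℝ≥0) : ℝ≥0∞)) := by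
  have habs : Absorbent ℝ Ω := absorbent_nhds_zero (hΩopen.mem_nhds h0)
  have hΩmeas : MeasurableSet Ω := hΩopen.measurableSet
  have hvol : volume Ω ≠ ⊤ := hΩbdd.measure_lt_top.ne
  set c : ℝ := N * (volume Ω).toReal with hc
  have hc0 : 0 ≤ c := by positivity
  obtain ⟨ε, hε, hballε⟩ := Metric.isOpen_iff.1 hΩopen 0 h0
  have hlip : LipschitzWith (⟨ε, hε.le⟩ : ℝ≥0)⁻¹ (gauge Ω) :=
    hΩconv.lipschitzWith_gauge (by exact_mod_cast hε) (by exact hballε)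
  have hgc : Continuous (gauge Ω) := hlip.continuous
  haveI : IsFiniteMeasure (volume.restrict Ω) :=
    ⟨by rwa [Measure.restrict_apply_univ, lt_top_iff_ne_top]⟩
  haveI : IsFiniteMeasure ((volume.restrict Ω).map (gauge Ω)) :=
    Measure.isFiniteMeasure_map _ _
  refine Measure.ext_of_Iic _ _ (fun a => ?_)
  rw [Measure.map_apply hgc.measurable measurableSet_Iic,
    Measure.restrict_apply (hgc.measurable measurableSet_Iic),
    withDensity_apply _ measurableSet_Iic]
  set b : ℝ := max 0 (min 1 a) with hb
  have hb0 : 0 ≤ b := le_max_left _ _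
  have hinter : Set.Ioc (0:ℝ) 1 ∩ Set.Iic a = Set.Ioc 0 b := by
    ext t
    simp only [Set.mem_inter_iff, Set.mem_Ioc, Set.mem_Iic]
    constructor
    · rintro ⟨⟨h1, h2⟩, h3⟩
      exact ⟨h1, le_max_of_le_right (le_min h2 h3)⟩
    · rintro ⟨h1, h2⟩
      rcases le_total (min 1 a) 0 with hm | hm
      · rw [hb, max_eq_left hm] at h2; linarith
      · rw [hb, max_eq_right hm] at h2
        exact ⟨⟨h1, h2.trans (min_le_left _ _)⟩, h2.trans (min_le_right _ _)⟩
  have hRHS : (∫⁻ t in Set.Iic a, ((Set.indicator (Set.Ioc (0:ℝ) 1)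
        (fun t => Real.toNNReal (c * t ^ (N - 1))) t : ℝ≥0) : ℝ≥0∞)) =
      ENNReal.ofReal ((volume Ω).toReal * b ^ N) := by
    have hcoe : (fun t => ((Set.indicator (Set.Ioc (0:ℝ) 1)
        (fun t => Real.toNNReal (c * t ^ (N - 1))) t : ℝ≥0) : ℝ≥0∞)) =
        Set.indicator (Set.Ioc (0:ℝ) 1) (fun t => ENNReal.ofReal (c * t ^ (N - 1))) := by
      funext t
      by_cases ht : t ∈ Set.Ioc (0:ℝ) 1
      · simp only [Set.indicator_of_mem ht]; rfl
      · simp [Set.indicator_of_notMem ht]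
    rw [hcoe, lintegral_indicator measurableSet_Ioc,
      Measure.restrict_restrict measurableSet_Ioc, hinter]
    have hint : IntegrableOn (fun t => c * t ^ (N - 1)) (Set.Ioc 0 b) volume :=
      (by fun_prop : Continuous fun t : ℝ => c * t ^ (N - 1)).integrableOn_Ioc
    have hnn : 0 ≤ᵐ[volume.restrict (Set.Ioc (0:ℝ) b)] fun t => c * t ^ (N - 1) := by
      filter_upwards [ae_restrict_mem measurableSet_Ioc] with t ht
      have := ht.1
      positivity
    rw [← ofReal_integral_eq_lintegral_ofReal hint hnn]
    congr 1
    rw [← intervalIntegral.integral_of_le hb0, intervalIntegral.integral_const_mul,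
      integral_pow]
    rw [show N - 1 + 1 = N from by omega, zero_pow (show N ≠ 0 by omega)]
    have hNcast : ((N - 1 : ℕ) : ℝ) + 1 = (N : ℝ) := by
      push_cast [Nat.cast_sub hN]
      ring
    rw [hNcast, hc]
    have hNne : (N : ℝ) ≠ 0 := Nat.cast_ne_zero.2 (by omega)
    field_simp
    ring
  rw [hRHS]
  haveI : Nontrivial (EuclideanSpace ℝ (Fin N)) := by
    refine ⟨⟨EuclideanSpace.single (⟨0, by omega⟩ : Fin N) (1:ℝ), 0, fun h => ?_⟩⟩
    have := congrArg norm h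
    rw [EuclideanSpace.norm_single, norm_zero] at this
    simp at this
  rcases le_or_gt a 0 with ha | ha
  · have hbeq : b = 0 := by
      rw [hb, min_eq_right (ha.trans zero_le_one), max_eq_left ha]
    have hsub : gauge Ω ⁻¹' Set.Iic a ∩ Ω ⊆ {0} := by
      rintro x ⟨hx1, -⟩
      have hx0 : gauge Ω x = 0 :=
        le_antisymm (le_trans hx1 ha) (gauge_nonneg _)
      exact (gauge_eq_zero habs (NormedSpace.isVonNBounded_of_isBounded ℝ hΩbdd)).1 hx0
    rw [measure_mono_null hsub (measure_singleton 0), hbeq,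
      zero_pow (show N ≠ 0 by omega), mul_zero, ENNReal.ofReal_zero]
  rcases le_or_gt 1 a with ha' | ha'
  · have hbeq : b = 1 := by rw [hb, min_eq_left ha', max_eq_right zero_le_one]
    have hset : gauge Ω ⁻¹' Set.Iic a ∩ Ω = Ω := by
      apply Set.inter_eq_right.2
      intro x hx
      exact le_trans (gauge_lt_one_of_mem_of_isOpen hΩopen hx).le ha'
    rw [hset, hbeq, one_pow, mul_one, ENNReal.ofReal_toReal hvol]
  · have hbeq : b = a := by rw [hb, min_eq_right ha'.le, max_eq_right ha.le]
    rw [hbeq, mul_comm, ENNReal.ofReal_mul (pow_nonneg ha.le N), ENNReal.ofReal_toReal hvol]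
    apply le_antisymm
    · have htend : Filter.Tendsto (fun r : ℝ => ENNReal.ofReal (r ^ N) * volume Ω)
          (nhdsWithin a (Set.Ioi a)) (nhds (ENNReal.ofReal (a ^ N) * volume Ω)) := by
        apply Filter.Tendsto.mono_left _ nhdsWithin_le_nhds
        exact ENNReal.Tendsto.mul_const (ENNReal.tendsto_ofReal ((continuous_pow N).tendsto a)) (Or.inr hvol)
      refine ge_of_tendsto htend ?_
      filter_upwards [Ioo_mem_nhdsGT_of_mem (Set.left_mem_Ico.mpr ha')] with r hr
      have hsub : gauge Ω ⁻¹' Set.Iic a ∩ Ω ⊆ {x | gauge Ω x < r} :=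
        fun x hx => lt_of_le_of_lt hx.1 hr.1
      calc volume (gauge Ω ⁻¹' Set.Iic a ∩ Ω) ≤ volume {x | gauge Ω x < r} :=
            measure_mono hsub
        _ = ENNReal.ofReal (r ^ N) * volume Ω := volume_gauge_lt hΩopen hΩconv h0 (ha.trans hr.1)
    · have hsub : {x : EuclideanSpace ℝ (Fin N) | gauge Ω x < a} ⊆
          gauge Ω ⁻¹' Set.Iic a ∩ Ω := by
        intro x hx
        refine ⟨Set.mem_preimage.2 (le_of_lt (Set.mem_setOf_eq ▸ hx)), ?_⟩
        rw [← gauge_lt_one_eq_self_of_isOpen hΩconv h0 hΩopen]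
        exact lt_trans hx ha'
      calc ENNReal.ofReal (a ^ N) * volume Ω = volume {x | gauge Ω x < a} :=
            (volume_gauge_lt hΩopen hΩconv h0 ha).symm
        _ ≤ _ := measure_mono hsub

lemma integral_gauge_comp {N : ℕ} (hN : 1 ≤ N) {Ω : Set (EuclideanSpace ℝ (Fin N))}
    (hΩopen : IsOpen Ω) (hΩbdd : Bornology.IsBounded Ω) (hΩconv : Convex ℝ Ω)
    (h0 : (0 : EuclideanSpace ℝ (Fin N)) ∈ Ω) (g : ℝ → ℝ) (hg : Continuous g) :
    ∫ x in Ω, g (gauge Ω x) =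
      N * (volume Ω).toReal * ∫ t in (0:ℝ)..1, g t * t ^ (N - 1) := by
  set c : ℝ := N * (volume Ω).toReal with hc
  obtain ⟨ε, hε, hballε⟩ := Metric.isOpen_iff.1 hΩopen 0 h0
  have hlip : LipschitzWith (⟨ε, hε.le⟩ : ℝ≥0)⁻¹ (gauge Ω) :=
    hΩconv.lipschitzWith_gauge (by exact_mod_cast hε) (by exact hballε)
  have hgc : Continuous (gauge Ω) := hlip.continuous
  set d : ℝ → ℝ≥0 := fun t => Set.indicator (Set.Ioc (0:ℝ) 1)
    (fun t => Real.toNNReal (c * t ^ (N - 1))) t with hd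
  have hd_meas : Measurable d :=
    (measurable_real_toNNReal.comp (by fun_prop)).indicator measurableSet_Ioc
  calc ∫ x in Ω, g (gauge Ω x)
      = ∫ t, g t ∂((volume.restrict Ω).map (gauge Ω)) :=
        (integral_map hgc.aemeasurable hg.aestronglyMeasurable).symm
    _ = ∫ t, g t ∂(volume.withDensity (fun t => ((d t : ℝ≥0) : ℝ≥0∞))) := by
        rw [gauge_map_measure hN hΩopen hΩbdd hΩconv h0]
    _ = ∫ t, d t • g t := integral_withDensity_eq_integral_smul hd_meas g
    _ = ∫ t, Set.indicator (Set.Ioc (0:ℝ) 1) (fun t => (c * t ^ (N - 1)) * g t) t := by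
        congr 1
        funext t
        by_cases ht : t ∈ Set.Ioc (0:ℝ) 1
        · rw [hd]
          simp only [Set.indicator_of_mem ht]
          rw [NNReal.smul_def, Real.coe_toNNReal _ (mul_nonneg
            (show (0:ℝ) ≤ ↑N * (volume Ω).toReal by positivity) (pow_nonneg ht.1.le _))]
          rw [smul_eq_mul, hc]
        · rw [hd]
          simp [Set.indicator_of_notMem ht]
    _ = ∫ t in Set.Ioc (0:ℝ) 1, (c * t ^ (N - 1)) * g t := integral_indicator measurableSet_Ioc
    _ = ∫ t in (0:ℝ)..1, (c * t ^ (N - 1)) * g t :=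
        (intervalIntegral.integral_of_le zero_le_one).symm
    _ = c * ∫ t in (0:ℝ)..1, g t * t ^ (N - 1) := by
        rw [← intervalIntegral.integral_const_mul]
        apply intervalIntegral.integral_congr
        intro t ht
        ring
lemma my_inradius_pos {N : ℕ} (hN : 1 ≤ N) {Ω : Set (EuclideanSpace ℝ (Fin N))}
    (hΩopen : IsOpen Ω) (hΩbdd : Bornology.IsBounded Ω)
    (h0 : (0 : EuclideanSpace ℝ (Fin N)) ∈ Ω) : 0 < inradius Ω := by
  obtain ⟨ε, hε, hballε⟩ := Metric.isOpen_iff.1 hΩopen 0 h0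
  obtain ⟨M, hM⟩ := hΩbdd.subset_closedBall 0
  have hM0 : 0 ≤ M := by
    have := hM h0
    simpa using this
  have hbdd : BddAbove {r : ℝ | ∃ x : EuclideanSpace ℝ (Fin N), Metric.ball x r ⊆ Ω} := by
    refine ⟨2 * M + 1, fun r hr => ?_⟩
    obtain ⟨x, hx⟩ := hr
    rcases le_or_gt r 0 with h | h
    · nlinarith
    · set v : EuclideanSpace ℝ (Fin N) := EuclideanSpace.single ⟨0, by omega⟩ (r / 2) with hv
      have hvn : ‖v‖ = r / 2 := by
        rw [hv, EuclideanSpace.norm_single]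
        exact abs_of_pos (by positivity)
      have h1 : x + v ∈ Metric.ball x r := by
        simp only [Metric.mem_ball, dist_eq_norm, add_sub_cancel_left, hvn]
        linarith
      have h2 : x - v ∈ Metric.ball x r := by
        simp only [Metric.mem_ball, dist_eq_norm, sub_sub_cancel_left, norm_neg, hvn]
        linarith
      have hA : ‖x + v‖ ≤ M := by simpa [dist_zero_right] using hM (hx h1)
      have hB : ‖x - v‖ ≤ M := by simpa [dist_zero_right] using hM (hx h2)
      have hdiff : (x + v) - (x - v) = (2 : ℝ) • v := by module
      have : ‖(x + v) - (x - v)‖ ≤ 2 * M := le_trans (norm_sub_le _ _) (by linarith)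
      rw [hdiff, norm_smul] at this
      simp only [Real.norm_ofNat, hvn] at this
      linarith
  have hmem : ε ∈ {r : ℝ | ∃ x : EuclideanSpace ℝ (Fin N), Metric.ball x r ⊆ Ω} := ⟨0, hballε⟩
  exact lt_of_lt_of_le hε (le_csSup hbdd hmem)

end Aux

/-- Let `1 ≤ q < 2` and let `Ω ⊂ ℝ^N` be an open bounded convex set containing
the ball `B_{R_Ω}(0)`, where `R_Ω` is the inradius. Let `f : [0,1] → [0,∞)` be `C¹`, decreasing,
with `f 1 = 0`, and let `j_Ω = gauge Ω` be the Minkowski functional of `Ω`. Then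
`∫_Ω f(j_Ω x)^q dx = N |Ω| ∫₀¹ f(t)^q t^(N-1) dt` and
`∫_Ω |∇(f ∘ j_Ω)|² dx ≤ (N |Ω| / R_Ω²) ∫₀¹ f'(t)² t^(N-1) dt`. -/
theorem stmt_17 (N : ℕ) (hN : 2 ≤ N) (q : ℝ) (hq1 : 1 ≤ q) (hq2 : q < 2)
    (Ω : Set (EuclideanSpace ℝ (Fin N)))
    (hΩopen : IsOpen Ω) (hΩbdd : Bornology.IsBounded Ω) (hΩconv : Convex ℝ Ω)
    (h0 : (0 : EuclideanSpace ℝ (Fin N)) ∈ Ω)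
    (hball : Metric.ball (0 : EuclideanSpace ℝ (Fin N)) (inradius Ω) ⊆ Ω)
    (f : ℝ → ℝ) (hf : ContDiffOn ℝ 1 f (Set.Icc 0 1))
    (hfdec : StrictAntiOn f (Set.Icc 0 1)) (hfnn : ∀ t ∈ Set.Icc (0:ℝ) 1, 0 ≤ f t)
    (hf1 : f 1 = 0) :
    (∫ x in Ω, f (gauge Ω x) ^ q) =
        N * (volume Ω).toReal * ∫ t in (0:ℝ)..1, f t ^ q * t ^ (N - 1) ∧
      (∫ x in Ω, ‖gradient (fun y => f (gauge Ω y)) x‖ ^ 2) ≤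
        N * (volume Ω).toReal / inradius Ω ^ 2 *
          ∫ t in (0:ℝ)..1, (deriv f t) ^ 2 * t ^ (N - 1) := by
  have hN1 : 1 ≤ N := by omega
  have hΩmeas : MeasurableSet Ω := hΩopen.measurableSet
  have hR : 0 < inradius Ω := my_inradius_pos hN1 hΩopen hΩbdd h0
  set R : ℝ := inradius Ω with hRdef
  haveI hnontriv : Nontrivial (EuclideanSpace ℝ (Fin N)) := by
    refine ⟨⟨EuclideanSpace.single (⟨0, by omega⟩ : Fin N) (1:ℝ), 0, fun h => ?_⟩⟩
    have := congrArg norm h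
    rw [EuclideanSpace.norm_single, norm_zero] at this
    simp at this
  constructor
  · have hq0 : (0:ℝ) < q := lt_of_lt_of_le one_pos hq1
    set F : ℝ → ℝ := fun t => f (min 1 (max 0 t)) with hF
    have hFcont : Continuous F :=
      (hf.continuousOn).comp_continuous
        (continuous_const.min (continuous_const.max continuous_id))
        (fun t => Set.mem_Icc.2 ⟨le_min zero_le_one (le_max_left _ _), min_le_left _ _⟩)
    have hFeq : ∀ t ∈ Set.Icc (0:ℝ) 1, F t = f t := by
      intro t ht
      rw [hF]
      simp only
      rw [max_eq_right ht.1, min_eq_right ht.2]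
    set g₁ : ℝ → ℝ := fun t => F t ^ q with hg₁
    have hg₁cont : Continuous g₁ := continuous_iff_continuousAt.2 fun t =>
      (Real.continuousAt_rpow_const (F t) q (Or.inr hq0.le)).comp hFcont.continuousAt
    have h1 : ∫ x in Ω, f (gauge Ω x) ^ q = ∫ x in Ω, g₁ (gauge Ω x) := by
      apply setIntegral_congr_fun hΩmeas
      intro x hx
      have hmem : gauge Ω x ∈ Set.Icc (0:ℝ) 1 :=
        ⟨gauge_nonneg _, (gauge_lt_one_of_mem_of_isOpen hΩopen hx).le⟩
      rw [hg₁]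
      simp only
      rw [hFeq _ hmem]
    have h2 : ∫ t in (0:ℝ)..1, f t ^ q * t ^ (N-1) = ∫ t in (0:ℝ)..1, g₁ t * t ^ (N-1) := by
      apply intervalIntegral.integral_congr
      intro t ht
      rw [Set.uIcc_of_le zero_le_one] at ht
      rw [hg₁]
      simp only
      rw [hFeq t ht]
    rw [h1, h2]
    exact integral_gauge_comp hN1 hΩopen hΩbdd hΩconv h0 g₁ hg₁cont
  · have hlipR : LipschitzWith (⟨R, hR.le⟩ : ℝ≥0)⁻¹ (gauge Ω) :=
      hΩconv.lipschitzWith_gauge (by exact_mod_cast hR) (by exact hball)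
    have hgc : Continuous (gauge Ω) := hlipR.continuous
    have habs : Absorbent ℝ Ω := absorbent_nhds_zero (hΩopen.mem_nhds h0)
    have hvon := NormedSpace.isVonNBounded_of_isBounded ℝ hΩbdd
    set f' : ℝ → ℝ := derivWithin f (Set.Icc 0 1) with hf'
    have hf'cont : ContinuousOn f' (Set.Icc 0 1) :=
      hf.continuousOn_derivWithin (uniqueDiffOn_Icc zero_lt_one) le_rfl
    set G : ℝ → ℝ := fun t => f' (min 1 (max 0 t)) with hG
    have hGcont : Continuous G :=
      hf'cont.comp_continuous (continuous_const.min (continuous_const.max continuous_id))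
        (fun t => Set.mem_Icc.2 ⟨le_min zero_le_one (le_max_left _ _), min_le_left _ _⟩)
    set g₂ : ℝ → ℝ := fun t => (G t) ^ 2 with hg₂
    have hg₂cont : Continuous g₂ := hGcont.pow 2
    have hae : ∀ᵐ x ∂(volume.restrict Ω),
        ‖gradient (fun y => f (gauge Ω y)) x‖ ^ 2 ≤ g₂ (gauge Ω x) / R ^ 2 := by
      have hdiff_ae : ∀ᵐ x ∂(volume.restrict Ω), DifferentiableAt ℝ (gauge Ω) x :=
        ae_restrict_of_ae hlipR.ae_differentiableAt
      have hne_ae : ∀ᵐ x ∂(volume.restrict Ω), x ≠ (0 : EuclideanSpace ℝ (Fin N)) := by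
        apply ae_restrict_of_ae
        have hset : {x : EuclideanSpace ℝ (Fin N) | ¬ x ≠ 0} = {0} := by ext x; simp
        rw [ae_iff, hset]
        exact measure_singleton 0
      filter_upwards [hdiff_ae, hne_ae, ae_restrict_mem hΩmeas] with x hdiff hne hxΩ
      have ht0 : 0 < gauge Ω x := (gauge_pos habs hvon).2 hne
      have ht1 : gauge Ω x < 1 := gauge_lt_one_of_mem_of_isOpen hΩopen hxΩ
      have hmem : Set.Icc (0:ℝ) 1 ∈ nhds (gauge Ω x) := Icc_mem_nhds ht0 ht1
      have hfd : DifferentiableAt ℝ f (gauge Ω x) :=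
        ((hf.differentiableOn one_ne_zero) (gauge Ω x) ⟨ht0.le, ht1.le⟩).differentiableAt hmem
      have hcomp : HasFDerivAt (fun y => f (gauge Ω y))
          ((deriv f (gauge Ω x)) • fderiv ℝ (gauge Ω) x) x :=
        hfd.hasDerivAt.comp_hasFDerivAt x hdiff.hasFDerivAt
      have hgradeq : ‖gradient (fun y => f (gauge Ω y)) x‖
          = ‖fderiv ℝ (fun y => f (gauge Ω y)) x‖ :=
        LinearIsometryEquiv.norm_map (InnerProductSpace.toDual ℝ _).symm _
      have hgaugebd : ‖fderiv ℝ (gauge Ω) x‖ ≤ R⁻¹ := by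
        have := norm_fderiv_le_of_lipschitz ℝ (x₀ := x) hlipR
        exact this
      have hGt : G (gauge Ω x) = deriv f (gauge Ω x) := by
        rw [hG]
        simp only
        rw [max_eq_right ht0.le, min_eq_right ht1.le, hf',
          derivWithin_of_mem_nhds hmem]
      have hnorm : ‖gradient (fun y => f (gauge Ω y)) x‖ ≤ |deriv f (gauge Ω x)| * R⁻¹ := by
        rw [hgradeq, hcomp.fderiv, norm_smul, Real.norm_eq_abs]
        exact mul_le_mul_of_nonneg_left hgaugebd (abs_nonneg _)
      refine le_trans (pow_le_pow_left₀ (norm_nonneg _) hnorm 2) ?_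
      rw [hg₂]
      simp only
      rw [hGt, mul_pow, sq_abs, div_eq_mul_inv, inv_pow]
    have hmajint : Integrable (fun x => g₂ (gauge Ω x) / R ^ 2) (volume.restrict Ω) := by
      have hcont : Continuous fun x : EuclideanSpace ℝ (Fin N) => g₂ (gauge Ω x) / R ^ 2 :=
        (hg₂cont.comp hgc).div_const _
      have hcl : IsCompact (closure Ω) :=
        Metric.isCompact_of_isClosed_isBounded isClosed_closure hΩbdd.closure
      exact (hcont.continuousOn.integrableOn_compact hcl).mono_set subset_closure
    have hmono := integral_mono_of_nonneg
      (Filter.Eventually.of_forall fun x => by positivity) hmajint hae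
    have hkey := integral_gauge_comp hN1 hΩopen hΩbdd hΩconv h0 g₂ hg₂cont
    have hIcongr : ∫ t in (0:ℝ)..1, g₂ t * t ^ (N-1)
        = ∫ t in (0:ℝ)..1, (deriv f t) ^ 2 * t ^ (N-1) := by
      rw [intervalIntegral.integral_of_le zero_le_one,
        intervalIntegral.integral_of_le zero_le_one]
      apply setIntegral_congr_ae measurableSet_Ioc
      have hne1 : ∀ᵐ t : ℝ ∂volume, t ≠ 1 := by
        have hset : {t : ℝ | ¬ t ≠ 1} = {1} := by ext t; simp
        rw [ae_iff, hset]
        exact measure_singleton 1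
      filter_upwards [hne1] with t ht1 htIoc
      have htoo : t ∈ Set.Ioo (0:ℝ) 1 := ⟨htIoc.1, lt_of_le_of_ne htIoc.2 ht1⟩
      have hgt : g₂ t = (deriv f t) ^ 2 := by
        rw [hg₂]
        simp only
        rw [hG]
        simp only
        rw [max_eq_right htoo.1.le, min_eq_right htoo.2.le, hf',
          derivWithin_of_mem_nhds (Icc_mem_nhds htoo.1 htoo.2)]
      rw [hgt]
    calc (∫ x in Ω, ‖gradient (fun y => f (gauge Ω y)) x‖ ^ 2)
        ≤ ∫ x in Ω, g₂ (gauge Ω x) / R ^ 2 := hmono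
      _ = (∫ x in Ω, g₂ (gauge Ω x)) / R ^ 2 := integral_div _ _
      _ = (N * (volume Ω).toReal * ∫ t in (0:ℝ)..1, (deriv f t) ^ 2 * t ^ (N-1)) / R ^ 2 := by
          rw [hkey, hIcongr]
      _ = N * (volume Ω).toReal / R ^ 2 * ∫ t in (0:ℝ)..1, (deriv f t) ^ 2 * t ^ (N-1) := by
          ring
end
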